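/- arXiv:2403.05719 — 2 statements merged into one kernel-verified Lean document; each statement's English description precedes it below -/
import Mathlib

section
/- The family of functions {φ_m : 0 ≤ m ≤ p^k − 1} is linearly independent over ℤ/pℤ, and it spans the space of all functions R → ℤ/pℤ; that is, it forms a ℤ/pℤ-basis of that function space. -/
/-- The binomial phi function `φ_m : ℤ/p^kℤ → ℤ/pℤ`, `φ_m(x) = C(x̄, m) mod p`. -/
def phi (p k m : ℕ) (x : ZMod (p ^ k)) : ZMod p := (x.val.choose m : ZMod p)

/-- The family `{φ_m : 0 ≤ m ≤ p^k − 1}` is linearly independent over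
`ℤ/pℤ` and spans the space of all functions `R → ℤ/pℤ`. -/
theorem stmt_7 (p k : ℕ) [Fact p.Prime] (hk : 1 ≤ k) :
    LinearIndependent (ZMod p) (fun m : Fin (p ^ k) => phi p k m.val) ∧
    Submodule.span (ZMod p) (Set.range (fun m : Fin (p ^ k) => phi p k m.val)) = ⊤ := by
  have hp : p.Prime := Fact.out
  have hpk : 0 < p ^ k := Nat.pow_pos (n := k) hp.pos
  haveI : NeZero (p ^ k) := ⟨hpk.ne'⟩
  have hli : LinearIndependent (ZMod p) (fun m : Fin (p ^ k) => phi p k m.val) := by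
    rw [Fintype.linearIndependent_iff]
    intro g hg
    suffices H : ∀ n : ℕ, ∀ i : Fin (p ^ k), i.val = n → g i = 0 by
      intro i; exact H i.val i rfl
    intro n
    induction n using Nat.strong_induction_on with
    | _ n ih =>
      intro i hin
      have ih : ∀ m : Fin (p ^ k), m.val < i.val → g m = 0 := by
        intro m hm
        exact ih m.val (hin ▸ hm) m rfl
      have hx := congrFun hg ((i.val : ZMod (p ^ k)))
      simp only [Finset.sum_apply, Pi.smul_apply, Pi.zero_apply, smul_eq_mul, phi] at hx
      have hval : ((i.val : ZMod (p ^ k))).val = i.val := ZMod.val_natCast_of_lt i.isLt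
      rw [hval] at hx
      rw [Finset.sum_eq_single i] at hx
      · simpa using hx
      · intro m _ hm
        rcases lt_or_gt_of_ne (fun h => hm (Fin.ext h)) with hlt | hgt
        · rw [ih m hlt]; ring
        · rw [Nat.choose_eq_zero_of_lt hgt]; simp
      · intro h; exact absurd (Finset.mem_univ i) h
  refine ⟨hli, ?_⟩
  apply hli.span_eq_top_of_card_eq_finrank
  simp [Module.finrank_pi, ZMod.card]
end

section
/- Let m be a natural number with m < p^k. Then the two-variable function f : R² → ℤ/pℤ defined by f(x,y) = φ_m(x·y) (the product x·y computed in R = ℤ/p^kℤ) lies in Ω^2_{m+2(p−1)}. -/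
open Polynomial Finset fwdDiff

variable (p : ℕ) [Fact p.Prime]

/-- `g a t = ((X+1)^t - 1)^a` over `ZMod p`. -/
noncomputable def gP (a t : ℕ) : Polynomial (ZMod p) := ((X + 1) ^ t - 1) ^ a

/-- `F a b = Δ^[b] (g a) 0`. -/
noncomputable def FP (a b : ℕ) : Polynomial (ZMod p) := (fwdDiff 1 : (ℕ → Polynomial (ZMod p)) → _)^[b] (gP p a) 0

lemma FP_eq_sum (a b : ℕ) :
    FP p a b = ∑ t ∈ range (b + 1), ((-1 : ℤ) ^ (b - t) * b.choose t) • gP p a t := by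
  rw [FP, fwdDiff_iter_eq_sum_shift]
  simp

lemma gP_expand (a t : ℕ) :
    gP p a t = ∑ i ∈ range (a + 1), ((-1 : ℤ) ^ (a - i) * a.choose i) • (X + 1 : Polynomial (ZMod p)) ^ (i * t) := by
  rw [gP, sub_pow]
  refine Finset.sum_congr rfl fun i hi => ?_
  rw [mem_range] at hi
  rw [zsmul_eq_mul]
  push_cast
  rw [show i + a = a - i + 2 * i by omega, pow_add, pow_mul, neg_one_sq, one_pow, mul_one,
    ← pow_mul, mul_comm t i]
  ring

lemma FP_eq_double (a b : ℕ) :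
    FP p a b = ∑ t ∈ range (b + 1), ∑ i ∈ range (a + 1),
      (((-1 : ℤ) ^ (b - t) * b.choose t) * ((-1 : ℤ) ^ (a - i) * a.choose i)) •
        (X + 1 : Polynomial (ZMod p)) ^ (i * t) := by
  rw [FP_eq_sum]
  refine Finset.sum_congr rfl fun t _ => ?_
  rw [gP_expand, Finset.smul_sum]
  refine Finset.sum_congr rfl fun i _ => ?_
  rw [smul_smul]

lemma FP_symm (a b : ℕ) : FP p a b = FP p b a := by
  rw [FP_eq_double, FP_eq_double, Finset.sum_comm]
  refine Finset.sum_congr rfl fun i _ => Finset.sum_congr rfl fun t _ => ?_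
  rw [mul_comm ((-1 : ℤ) ^ (b - t) * b.choose t), mul_comm i t]


/-- mod p, the p-th iterated forward difference is the shift-by-p difference. -/
lemma fwdDiff_iter_prime (f : ℕ → Polynomial (ZMod p)) (t : ℕ) :
    (fwdDiff 1 : (ℕ → Polynomial (ZMod p)) → _)^[p] f t = f (t + p) - f t := by
  have hp : p.Prime := Fact.out
  rw [fwdDiff_iter_eq_sum_shift, Finset.sum_range_succ]
  have h0 : ∑ k ∈ range p, ((-1 : ℤ) ^ (p - k) * p.choose k) • f (t + k • 1)
      = ((-1 : ℤ) ^ p) • f t := by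
    rw [Finset.sum_eq_single 0]
    · simp
    · intro k hk hk0
      have hdvd : (p : ℕ) ∣ p.choose k := hp.dvd_choose_self hk0 (mem_range.mp hk)
      have h2 : ((p.choose k : ℤ) : Polynomial (ZMod p)) = 0 := by
        rw [Int.cast_natCast, (CharP.cast_eq_zero_iff (Polynomial (ZMod p)) p _).mpr hdvd]
      rw [zsmul_eq_mul, Int.cast_mul, h2, mul_zero, zero_mul]
    · intro h
      exact absurd (mem_range.mpr hp.pos) h
  rw [h0, zsmul_eq_mul, Int.cast_pow, Int.cast_neg, Int.cast_one,
    neg_one_pow_char (Polynomial (ZMod p))]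
  simp [add_comm, sub_eq_add_neg]

lemma gP_shift (a t : ℕ) :
    gP p a (t + p) = ∑ i ∈ range (a + 1),
      ((a.choose i : Polynomial (ZMod p)) * (X ^ p + 1) ^ i * X ^ (p * (a - i))) * gP p i t := by
  have hXp : (X + 1 : Polynomial (ZMod p)) ^ p = X ^ p + 1 := by
    rw [add_pow_char]; simp
  have h1 : ((X + 1 : Polynomial (ZMod p)) ^ (t + p) - 1)
      = (X ^ p + 1) * ((X + 1) ^ t - 1) + X ^ p := by
    rw [pow_add, hXp]; ring
  rw [gP, h1, add_pow]
  refine Finset.sum_congr rfl fun i _ => ?_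
  rw [gP, mul_pow, ← pow_mul]
  ring

lemma fwdDiff_iter_p_gP (a : ℕ) :
    (fwdDiff 1 : (ℕ → Polynomial (ZMod p)) → _)^[p] (gP p a)
      = (∑ i ∈ range a, ((a.choose i : Polynomial (ZMod p)) * (X ^ p + 1) ^ i * X ^ (p * (a - i))) • gP p i)
        + (((X ^ p + 1 : Polynomial (ZMod p)) ^ a - 1) • gP p a) := by
  funext t
  rw [fwdDiff_iter_prime, gP_shift, Finset.sum_range_succ]
  simp only [Pi.add_apply, Finset.sum_apply, Pi.smul_apply, smul_eq_mul]
  rw [Nat.choose_self, Nat.sub_self, mul_zero, pow_zero]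
  push_cast
  ring

lemma FP_rec (a b : ℕ) (hb : p ≤ b) :
    FP p a b = (∑ i ∈ range a,
        ((a.choose i : Polynomial (ZMod p)) * (X ^ p + 1) ^ i * X ^ (p * (a - i))) * FP p i (b - p))
      + ((X ^ p + 1 : Polynomial (ZMod p)) ^ a - 1) * FP p a (b - p) := by
  have hbb : b = (b - p) + p := by omega
  rw [FP]
  conv_lhs => rw [hbb]
  rw [Function.iterate_add_apply, fwdDiff_iter_p_gP]
  rw [fwdDiff_iter_add, fwdDiff_iter_finset_sum, fwdDiff_iter_const_smul]
  simp only [Pi.add_apply, Finset.sum_apply, Pi.smul_apply, smul_eq_mul]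
  simp only [fwdDiff_iter_const_smul, Pi.smul_apply, smul_eq_mul]
  rfl

lemma choose_mod_le (a i : ℕ) (hc : (a.choose i : ZMod p) ≠ 0) : i % p ≤ a % p := by
  by_contra hlt
  push_neg at hlt
  have hl := Choose.choose_modEq_choose_mod_mul_choose_div (p := p) (n := a) (k := i)
  have h2 : (a.choose i : ZMod p) = (((a % p).choose (i % p) * ((a / p).choose (i / p)) : ℕ) : ZMod p) := by
    have := (ZMod.intCast_eq_intCast_iff _ _ _).mpr hl
    exact_mod_cast this
  rw [Nat.choose_eq_zero_of_lt hlt, zero_mul, Nat.cast_zero] at h2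
  exact hc h2

lemma div_ineq (i a : ℕ) (hia : i < a) (hmod : i % p ≤ a % p) :
    a / p + 1 ≤ (a - i) + i / p := by
  have hp2 : 2 ≤ p := (Fact.out : p.Prime).two_le
  have ha := Nat.div_add_mod a p
  have hi := Nat.div_add_mod i p
  have hq : i / p ≤ a / p := Nat.div_le_div_right hia.le
  rcases eq_or_lt_of_le hq with heq | hlt
  · rw [heq]; omega
  · have hstep : i + p * (a / p - i / p) ≤ a := by
      have : p * (i / p) + p * (a / p - i / p) = p * (a / p) := by
        rw [← Nat.mul_add]
        congr 1
        omega
      omega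
    have hmul : 2 * (a / p - i / p) ≤ p * (a / p - i / p) :=
      Nat.mul_le_mul_right _ hp2
    omega

lemma FP_step (a b : ℕ) (hb : p ≤ b)
    (IH : ∀ i j, i + j < a + b → (X : Polynomial (ZMod p)) ^ (p * (i / p) + p * (j / p)) ∣ FP p i j) :
    (X : Polynomial (ZMod p)) ^ (p * (a / p) + p * (b / p)) ∣ FP p a b := by
  have hp2 : 2 ≤ p := (Fact.out : p.Prime).two_le
  have hdiv : b / p = (b - p) / p + 1 := Nat.div_eq_sub_div (by omega) hb
  rw [FP_rec p a b hb]
  apply dvd_add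
  · apply Finset.dvd_sum
    intro i hi
    rw [mem_range] at hi
    by_cases hc : ((a.choose i : ZMod p)) = 0
    · have : ((a.choose i : ℕ) : Polynomial (ZMod p)) = 0 := by
        rw [← Polynomial.C_eq_natCast, hc, map_zero]
      rw [this, zero_mul, zero_mul, zero_mul]
      exact dvd_zero _
    · have hmod := choose_mod_le p a i hc
      have hkey : a / p + 1 ≤ (a - i) + i / p := div_ineq p i a hi hmod
      have hIH := IH i (b - p) (by omega)
      have hdd : (X : Polynomial (ZMod p)) ^ (p * (a / p) + p * (b / p)) ∣
          X ^ (p * (a - i)) * FP p i (b - p) := by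
        have h1 : (X : Polynomial (ZMod p)) ^ (p * (a - i) + (p * (i / p) + p * ((b - p) / p))) ∣
            X ^ (p * (a - i)) * FP p i (b - p) := by
          rw [pow_add]
          exact mul_dvd_mul dvd_rfl hIH
        refine dvd_trans (pow_dvd_pow _ ?_) h1
        have : p * (a / p) + p ≤ p * (a - i) + p * (i / p) := by
          have := Nat.mul_le_mul_left p hkey
          rw [Nat.mul_add, Nat.mul_add] at this
          omega
        rw [hdiv, Nat.mul_add] at *
        omega
      rw [mul_assoc]
      exact Dvd.dvd.mul_left hdd _
  · have h1 : (X : Polynomial (ZMod p)) ^ p ∣ (X ^ p + 1 : Polynomial (ZMod p)) ^ a - 1 := by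
      have := sub_dvd_pow_sub_pow (X ^ p + 1 : Polynomial (ZMod p)) 1 a
      simpa using this
    have hIH := IH a (b - p) (by omega)
    have : (X : Polynomial (ZMod p)) ^ (p + (p * (a / p) + p * ((b - p) / p))) ∣
        ((X ^ p + 1 : Polynomial (ZMod p)) ^ a - 1) * FP p a (b - p) := by
      rw [pow_add]
      exact mul_dvd_mul h1 hIH
    refine dvd_trans (pow_dvd_pow _ ?_) this
    rw [hdiv]
    ring_nf
    omega

lemma FP_dvd (a b : ℕ) : (X : Polynomial (ZMod p)) ^ (p * (a / p) + p * (b / p)) ∣ FP p a b := by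
  have hp2 : 2 ≤ p := (Fact.out : p.Prime).two_le
  suffices H : ∀ n a b, a + b ≤ n → (X : Polynomial (ZMod p)) ^ (p * (a / p) + p * (b / p)) ∣ FP p a b by
    exact H (a + b) a b le_rfl
  intro n
  induction n using Nat.strong_induction_on with
  | _ n IHn =>
    intro a b hab
    rcases le_or_gt p b with hb | hb
    · refine FP_step p a b hb (fun i j hij => ?_)
      exact IHn (a + b - 1) (by omega) i j (by omega)
    rcases le_or_gt p a with ha | ha
    · rw [FP_symm, add_comm (p * (a / p))]
      refine FP_step p b a ha (fun i j hij => ?_)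
      exact IHn (a + b - 1) (by omega) i j (by omega)
    · have h0 : a / p = 0 := Nat.div_eq_of_lt ha
      have h0' : b / p = 0 := Nat.div_eq_of_lt hb
      rw [h0, h0']
      simp

lemma lucas_cast (N K : ℕ) :
    (N.choose K : ZMod p) = ((N % p).choose (K % p) : ZMod p) * ((N / p).choose (K / p) : ZMod p) := by
  have h := Choose.choose_modEq_choose_mod_mul_choose_div (p := p) (n := N) (k := K)
  have h2 := (ZMod.intCast_eq_intCast_iff _ _ _).mpr h
  exact_mod_cast h2

lemma choose_mod_pow (k : ℕ) : ∀ m n : ℕ, m < p ^ k →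
    (((n % p ^ k).choose m : ℕ) : ZMod p) = ((n.choose m : ℕ) : ZMod p) := by
  induction k with
  | zero =>
    intro m n hm
    have : m = 0 := by simpa [Nat.lt_one_iff] using hm
    simp [this]
  | succ k IH =>
    intro m n hm
    rw [lucas_cast p (n % p ^ (k + 1)) m, lucas_cast p n m]
    have e1 : n % p ^ (k + 1) % p = n % p := Nat.mod_mod_of_dvd n (dvd_pow_self p k.succ_ne_zero)
    have e2 : n % p ^ (k + 1) / p = n / p % p ^ k := by
      rw [pow_succ, mul_comm]
      exact Nat.mod_mul_right_div_self n p (p ^ k)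
    have hmp : m / p < p ^ k := by
      have hp0 : 0 < p := (Fact.out : p.Prime).pos
      rw [Nat.div_lt_iff_lt_mul hp0]
      calc m < p ^ (k + 1) := hm
        _ = p ^ k * p := by rw [pow_succ]
    rw [e1, e2, IH (m / p) (n / p) hmp]

lemma newton (q : ℕ) (gg : ℕ → ZMod p) (n : ℕ) (hn : n < q) :
    gg n = ∑ a ∈ range q, (n.choose a : ZMod p) * (fwdDiff 1 : (ℕ → ZMod p) → _)^[a] gg 0 := by
  have h := shift_eq_sum_fwdDiff_iter (1 : ℕ) gg n 0
  simp only [zero_add, smul_eq_mul, mul_one, nsmul_eq_mul] at h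
  rw [h]
  refine Finset.sum_subset (Finset.range_subset_range.mpr hn) fun a _ ha => ?_
  rw [mem_range, not_lt] at ha
  rw [Nat.choose_eq_zero_of_lt (by omega), Nat.cast_zero, zero_mul]

def Gfun (p k m : ℕ) : ℕ → ℕ → ZMod p :=
  fun i j => phi p k m ((i : ZMod (p ^ k)) * (j : ZMod (p ^ k)))

noncomputable def cCoef (p k m a b : ℕ) : ZMod p :=
  (fwdDiff 1 : (ℕ → ZMod p) → _)^[b]
    (fun j => (fwdDiff 1 : (ℕ → ZMod p) → _)^[a] (fun i => Gfun p k m i j) 0) 0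

lemma Gfun_eq (k m : ℕ) (hm : m < p ^ k) (i j : ℕ) :
    Gfun p k m i j = ((i * j).choose m : ZMod p) := by
  haveI : NeZero (p ^ k) := ⟨(pow_pos (Fact.out : p.Prime).pos k).ne'⟩
  rw [Gfun, phi, ← Nat.cast_mul, ZMod.val_natCast]
  exact choose_mod_pow p k m (i * j) hm

lemma pointwise (k m : ℕ) (hm : m < p ^ k) (v : Fin 2 → ZMod (p ^ k)) :
    phi p k m (v 0 * v 1) = ∑ a ∈ range (p ^ k), ∑ b ∈ range (p ^ k),
      cCoef p k m a b * (phi p k a (v 0) * phi p k b (v 1)) := by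
  haveI : NeZero (p ^ k) := ⟨(pow_pos (Fact.out : p.Prime).pos k).ne'⟩
  have hx : ((v 0).val : ZMod (p ^ k)) = v 0 := ZMod.natCast_rightInverse (v 0)
  have hy : ((v 1).val : ZMod (p ^ k)) = v 1 := ZMod.natCast_rightInverse (v 1)
  have h1 : phi p k m (v 0 * v 1) = Gfun p k m (v 0).val (v 1).val := by
    rw [Gfun, hx, hy]
  rw [h1]
  have h2 := newton p (p ^ k) (fun i => Gfun p k m i (v 1).val) (v 0).val (ZMod.val_lt _)
  refine Eq.trans h2 ?_
  refine Finset.sum_congr rfl fun a _ => ?_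
  have h3 := newton p (p ^ k)
    (fun j => (fwdDiff 1 : (ℕ → ZMod p) → _)^[a] (fun i => Gfun p k m i j) 0)
    (v 1).val (ZMod.val_lt _)
  have h4 : (fwdDiff 1 : (ℕ → ZMod p) → _)^[a] (fun i => Gfun p k m i (v 1).val) 0
      = (fun j => (fwdDiff 1 : (ℕ → ZMod p) → _)^[a] (fun i => Gfun p k m i j) 0) (v 1).val := rfl
  rw [h3, Finset.mul_sum]
  refine Finset.sum_congr rfl fun b _ => ?_
  show ((v 0).val.choose a : ZMod p) * (((v 1).val.choose b : ZMod p) * cCoef p k m a b) = _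
  rw [phi, phi]
  ring

lemma cCoef_eq_coeff (k m : ℕ) (hm : m < p ^ k) (a b : ℕ) :
    cCoef p k m a b = (FP p a b).coeff m := by
  rw [cCoef, fwdDiff_iter_eq_sum_shift, FP_eq_sum, Polynomial.finset_sum_coeff]
  refine Finset.sum_congr rfl fun j _ => ?_
  rw [Polynomial.coeff_smul, fwdDiff_iter_eq_sum_shift, gP_expand, Polynomial.finset_sum_coeff]
  simp only [zero_add, smul_eq_mul, mul_one]
  congr 1
  refine Finset.sum_congr rfl fun i _ => ?_
  rw [Polynomial.coeff_smul, Polynomial.coeff_X_add_one_pow]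
  congr 1
  exact Gfun_eq p k m hm i j

lemma cCoef_vanish (k m : ℕ) (hm : m < p ^ k) (a b : ℕ) (hab : m + 2 * (p - 1) < a + b) :
    cCoef p k m a b = 0 := by
  rw [cCoef_eq_coeff p k m hm]
  refine Polynomial.X_pow_dvd_iff.mp (FP_dvd p a b) m ?_
  have hp0 : 0 < p := (Fact.out : p.Prime).pos
  obtain ⟨A, hA⟩ : ∃ A, A = p * (a / p) := ⟨_, rfl⟩
  obtain ⟨B, hB⟩ : ∃ B, B = p * (b / p) := ⟨_, rfl⟩
  have ha : A + a % p = a := by rw [hA]; exact Nat.div_add_mod a p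
  have hb : B + b % p = b := by rw [hB]; exact Nat.div_add_mod b p
  have ha' : a % p < p := Nat.mod_lt _ hp0
  have hb' : b % p < p := Nat.mod_lt _ hp0
  rw [← hA, ← hB]
  omega

/-- For `m < p^k`, the two-variable function `(x,y) ↦ φ_m(x·y)` on
`R² = (ℤ/p^kℤ)²` lies in `Ω²_{m+2(p−1)}`. -/
theorem stmt_19 (p k m : ℕ) [Fact p.Prime] (hk : 1 ≤ k) (hm : m < p ^ k) :
    (fun v : Fin 2 → ZMod (p ^ k) => phi p k m (v 0 * v 1))
      ∈ Submodule.span (ZMod p)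
        {f : (Fin 2 → ZMod (p ^ k)) → ZMod p |
          ∃ α : Fin 2 → ℕ, α 0 + α 1 ≤ m + 2 * (p - 1) ∧
            f = fun v => phi p k (α 0) (v 0) * phi p k (α 1) (v 1)} := by
  classical
  have hfun : (fun v : Fin 2 → ZMod (p ^ k) => phi p k m (v 0 * v 1))
      = ∑ a ∈ Finset.range (p ^ k), ∑ b ∈ Finset.range (p ^ k),
          cCoef p k m a b • (fun v : Fin 2 → ZMod (p ^ k) => phi p k a (v 0) * phi p k b (v 1)) := by
    funext v
    rw [pointwise p k m hm v]
    simp only [Finset.sum_apply, Pi.smul_apply, smul_eq_mul]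
  rw [hfun]
  refine Submodule.sum_mem _ fun a _ => Submodule.sum_mem _ fun b _ => ?_
  by_cases hab : a + b ≤ m + 2 * (p - 1)
  · refine Submodule.smul_mem _ _ (Submodule.subset_span ?_)
    refine ⟨![a, b], by simpa using hab, by funext v; simp⟩
  · rw [cCoef_vanish p k m hm a b (by omega), zero_smul]
    exact Submodule.zero_mem _
end
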